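/- Let F be a left-continuous Wardowski function and a > 0, and let φ(t) = sup { s ≥ 0 : a + F(s) ≤ F(t) }. Then for every t > 0 with φ(t) > 0, one has a + F(φ(t)) ≤ F(t); in particular φ(t) < t for all t > 0. -/

import Mathlib

open Filter

private lemma lt_const_add_self (a : ℝ) (ha : 0 < a) (x : EReal) (hb : x ≠ ⊥) (ht : x ≠ ⊤) :
    x < (a : EReal) + x := by
  induction x using EReal.rec with
  | bot => exact absurd rfl hb
  | top => exact absurd rfl ht
  | coe b =>
    rw [← EReal.coe_add]
    exact_mod_cast by linarith

/-- For a left-continuous Wardowski function `F` and `a > 0`, with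
`φ t = sup {s ≥ 0 : a + F s ≤ F t}`, for every `t > 0` with `φ t > 0` one has
`a + F (φ t) ≤ F t`; in particular `φ t < t` for all `t > 0`. -/
theorem wardowski_leftCont_phi_ineq
    (F : ℝ → EReal)
    (hfin : ∀ t, 0 ≤ t → F t < ⊤)
    (hbot : ∀ t, 0 ≤ t → (F t = ⊥ ↔ t = 0))
    (hmono : ∀ s t, 0 ≤ s → s < t → F s < F t)
    (hlim : Tendsto F (nhdsWithin 0 (Set.Ioi 0)) (nhds ⊥))
    (hlc : ∀ t : ℝ, 0 < t → Tendsto F (nhdsWithin t (Set.Iio t)) (nhds (F t)))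
    (a : ℝ) (ha : 0 < a)
    (φ : ℝ → ℝ) (hφ : ∀ t, φ t = sSup {s : ℝ | 0 ≤ s ∧ (a : EReal) + F s ≤ F t}) :
    (∀ t, 0 < t → 0 < φ t → (a : EReal) + F (φ t) ≤ F t) ∧
    (∀ t, 0 < t → φ t < t) := by
  set S : ℝ → Set ℝ := fun t => {s : ℝ | 0 ≤ s ∧ (a : EReal) + F s ≤ F t} with hS
  have h0mem : ∀ t, (0:ℝ) ∈ S t := by
    intro t
    refine ⟨le_refl 0, ?_⟩
    have h0 : F 0 = ⊥ := (hbot 0 le_rfl).mpr rfl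
    rw [h0]
    simp
  have hne : ∀ t, (S t).Nonempty := fun t => ⟨0, h0mem t⟩
  have hub : ∀ t, 0 < t → ∀ s ∈ S t, s ≤ t := by
    intro t ht s hs
    by_contra hst
    push_neg at hst
    have hs0 : 0 < s := ht.trans hst
    have hFt : F t ≤ F s := le_of_lt (hmono t s ht.le hst)
    have hle : (a : EReal) + F s ≤ F s := hs.2.trans hFt
    have hbotS : F s ≠ ⊥ := fun h => (hs0.ne' ((hbot s hs0.le).mp h))
    exact absurd hle (not_le.mpr (lt_const_add_self a ha (F s) hbotS (hfin s hs0.le).ne))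
  have hbdd : ∀ t, 0 < t → BddAbove (S t) := fun t ht => ⟨t, hub t ht⟩
  have key : ∀ t, 0 < t → 0 < φ t → (a : EReal) + F (φ t) ≤ F t := by
    intro t ht hφt
    -- eventually on 𝓝[<] φ t, a + F s ≤ F t
    have hev : ∀ᶠ s in nhdsWithin (φ t) (Set.Iio (φ t)), (a : EReal) + F s ≤ F t := by
      have hmem : Set.Ioo (0:ℝ) (φ t) ∈ nhdsWithin (φ t) (Set.Iio (φ t)) :=
        Ioo_mem_nhdsLT_of_mem ⟨hφt, le_refl _⟩
      filter_upwards [hmem] with s hs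
      have hsφ : s < sSup (S t) := by rw [← hφ t]; exact hs.2
      obtain ⟨s', hs', hss'⟩ := exists_lt_of_lt_csSup (hne t) hsφ
      have hFs : F s ≤ F s' := le_of_lt (hmono s s' hs.1.le hss')
      calc (a : EReal) + F s ≤ (a : EReal) + F s' := by
            exact add_le_add_right hFs _
        _ ≤ F t := hs'.2
    -- tendsto of a + F s to a + F (φ t)
    have hφbot : F (φ t) ≠ ⊥ := fun h => hφt.ne' ((hbot _ hφt.le).mp h)
    have hcont : ContinuousAt (fun p : EReal × EReal => p.1 + p.2) ((a : EReal), F (φ t)) :=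
      EReal.continuousAt_add (Or.inl (by simp)) (Or.inl (by simp))
    have htend : Tendsto (fun s => (a : EReal) + F s)
        (nhdsWithin (φ t) (Set.Iio (φ t))) (nhds ((a : EReal) + F (φ t))) := by
      have : Tendsto (fun s => ((a : EReal), F s))
          (nhdsWithin (φ t) (Set.Iio (φ t))) (nhds ((a : EReal), F (φ t))) :=
        by
        rw [nhds_prod_eq]
        exact tendsto_const_nhds.prodMk (hlc (φ t) hφt)
      exact hcont.tendsto.comp this
    exact le_of_tendsto htend hev
  refine ⟨key, ?_⟩
  intro t ht
  have hle : φ t ≤ t := by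
    rw [hφ t]; exact csSup_le (hne t) (hub t ht)
  rcases lt_or_eq_of_le hle with h | h
  · exact h
  · exfalso
    have hφt : 0 < φ t := by rw [h]; exact ht
    have := key t ht hφt
    rw [h] at this
    have hbotT : F t ≠ ⊥ := fun hb => ht.ne' ((hbot t ht.le).mp hb)
    exact absurd this (not_le.mpr (lt_const_add_self a ha (F t) hbotT (hfin t ht.le).ne))
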